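/- (Proposition 6.) The threshold function t ↦ Θ(t) = k₀(t)·F(k₀(t)) + k₁(t)·(1 − F(k₁(t))) + t·(F(k₁(t)) − F(k₀(t))) is strictly increasing in t on [0, ∞). Consequently, for any voter cost γ ∈ ℝ and any t′ > t ≥ 0, if γ ≤ Θ(t) (so the voter's optimal k is k₁(t)) then γ ≤ Θ(t′) (the voter's optimal k is k₁(t′)). -/

import Mathlib

open MeasureTheory

/-- A cost distribution: a CDF `F` with continuously differentiable structure
given by a strictly positive, differentiable, log-concave density `f` with full
support on `ℝ`. -/
structure CostDist where
  F : ℝ → ℝ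
  f : ℝ → ℝ
  deriv_eq : ∀ x : ℝ, HasDerivAt F (f x) x
  f_pos : ∀ x : ℝ, 0 < f x
  f_diff : Differentiable ℝ f
  f_logConcave : ConcaveOn ℝ Set.univ fun x => Real.log (f x)
  tendsto_bot : Filter.Tendsto F Filter.atBot (nhds 0)
  tendsto_top : Filter.Tendsto F Filter.atTop (nhds 1)

/-- Expected responsiveness of the classifier `δ = (δ₁, δ₀)` at precision `φ`. -/
noncomputable def rho (d1 d0 phi : ℝ) : ℝ := (d1 + d0 - 1) * (2 * phi - 1)

/-- The designer's expected payoff `EU_D(δ | r)`. -/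
noncomputable def EUD (D : CostDist) (phi A1 A0 B1 B0 r d1 d0 : ℝ) : ℝ :=
  D.F (r * rho d1 d0 phi) *
      (phi * (A1 * d1 + A0 * (1 - d1)) + (1 - phi) * (A0 * d0 + A1 * (1 - d0))) +
    (1 - D.F (r * rho d1 d0 phi)) *
      (phi * (B1 * d0 + B0 * (1 - d0)) + (1 - phi) * (B0 * d1 + B1 * (1 - d1)))

/-- A voter's expected payoff conditional on complying, `EU₁(r | γ)`. -/
noncomputable def EU1 (D : CostDist) (phi t gamma d1 d0 r : ℝ) : ℝ :=
  -gamma + r * rho d1 d0 phi * (1 - D.F (r * rho d1 d0 phi)) + t * D.F (r * rho d1 d0 phi)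

/-- A voter's expected payoff conditional on not complying, `EU₀(r)`. -/
noncomputable def EU0 (D : CostDist) (phi t d1 d0 r : ℝ) : ℝ :=
  -(r * rho d1 d0 phi) * D.F (r * rho d1 d0 phi) + t * D.F (r * rho d1 d0 phi)

/-- A voter's overall payoff `V(r | γ) = max(EU₁(r | γ), EU₀(r))`. -/
noncomputable def V (D : CostDist) (phi t gamma d1 d0 r : ℝ) : ℝ :=
  max (EU1 D phi t gamma d1 d0 r) (EU0 D phi t d1 d0 r)

/-- Strict quasiconcavity of a real function on a set. -/
def StrictQuasiconcaveOn (s : Set ℝ) (g : ℝ → ℝ) : Prop :=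
  ∀ ⦃x⦄, x ∈ s → ∀ ⦃y⦄, y ∈ s → x ≠ y → ∀ ⦃a b : ℝ⦄, 0 < a → 0 < b → a + b = 1 →
    min (g x) (g y) < g (a * x + b * y)

/-- Strict quasiconvexity of a real function on a set. -/
def StrictQuasiconvexOn (s : Set ℝ) (g : ℝ → ℝ) : Prop :=
  ∀ ⦃x⦄, x ∈ s → ∀ ⦃y⦄, y ∈ s → x ≠ y → ∀ ⦃a b : ℝ⦄, 0 < a → 0 < b → a + b = 1 →
    g (a * x + b * y) < max (g x) (g y)

/-- `(r, δ)` is an equilibrium: `r` maximizes the median voter's payoff given `δ`,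
and `δ ∈ [0,1]²` maximizes the designer's payoff given `r`. -/
def IsEquilibrium (D : CostDist) (phi t A1 A0 B1 B0 gammaMu r d1 d0 : ℝ) : Prop :=
  d1 ∈ Set.Icc (0 : ℝ) 1 ∧ d0 ∈ Set.Icc (0 : ℝ) 1 ∧
  (∀ r' : ℝ, V D phi t gammaMu d1 d0 r' ≤ V D phi t gammaMu d1 d0 r) ∧
  (∀ e1 ∈ Set.Icc (0 : ℝ) 1, ∀ e0 ∈ Set.Icc (0 : ℝ) 1,
    EUD D phi A1 A0 B1 B0 r e1 e0 ≤ EUD D phi A1 A0 B1 B0 r d1 d0)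

namespace Prop6Aux

variable (D : CostDist)

lemma contF : Continuous D.F := by
  have : Differentiable ℝ D.F := fun x => (D.deriv_eq x).differentiableAt
  exact this.continuous

lemma contf : Continuous D.f := D.f_diff.continuous

lemma smF : StrictMono D.F :=
  strictMono_of_deriv_pos (fun x => by rw [(D.deriv_eq x).deriv]; exact D.f_pos x)

lemma F_nonneg (x : ℝ) : 0 ≤ D.F x := (smF D).monotone.le_of_tendsto D.tendsto_bot x

lemma F_le_one (x : ℝ) : D.F x ≤ 1 := (smF D).monotone.ge_of_tendsto D.tendsto_top x

lemma F_pos (x : ℝ) : 0 < D.F x :=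
  lt_of_le_of_lt (F_nonneg D (x - 1)) (smF D (by linarith))

lemma F_lt_one (x : ℝ) : D.F x < 1 :=
  lt_of_lt_of_le (smF D (lt_add_one x)) (F_le_one D (x + 1))

lemma logconc {x y δ : ℝ} (hxy : x ≤ y) (hδ : 0 ≤ δ) :
    D.f x * D.f (y + δ) ≤ D.f (x + δ) * D.f y := by
  rcases eq_or_lt_of_le (show x ≤ y + δ by linarith) with h | h
  · have hx : x = y := le_antisymm hxy (by linarith)
    have hd : δ = 0 := by linarith
    subst hx; subst hd; simp
  · set lam := δ / (y + δ - x) with hlam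
    have hpos : 0 < y + δ - x := by linarith
    have h1 : 0 ≤ lam := div_nonneg hδ hpos.le
    have h2 : lam ≤ 1 := (div_le_one hpos).mpr (by linarith)
    have e1 : (1 - lam) * x + lam * (y + δ) = x + δ := by
      have hl : lam * (y + δ - x) = δ := by rw [hlam]; exact div_mul_cancel₀ _ hpos.ne'
      linear_combination hl
    have e2 : lam * x + (1 - lam) * (y + δ) = y := by
      have hl : lam * (y + δ - x) = δ := by rw [hlam]; exact div_mul_cancel₀ _ hpos.ne'
      linear_combination -hl
    have c1 := D.f_logConcave.2 (Set.mem_univ x) (Set.mem_univ (y + δ))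
      (by linarith : (0:ℝ) ≤ 1 - lam) h1 (by ring)
    have c2 := D.f_logConcave.2 (Set.mem_univ x) (Set.mem_univ (y + δ))
      h1 (by linarith : (0:ℝ) ≤ 1 - lam) (by ring)
    simp only [smul_eq_mul] at c1 c2
    rw [e1] at c1
    rw [e2] at c2
    have key : Real.log (D.f x) + Real.log (D.f (y + δ)) ≤
        Real.log (D.f (x + δ)) + Real.log (D.f y) := by linarith
    have := Real.exp_le_exp.mpr key
    rwa [Real.exp_add, Real.exp_add, Real.exp_log (D.f_pos _), Real.exp_log (D.f_pos _),
      Real.exp_log (D.f_pos _), Real.exp_log (D.f_pos _)] at this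

lemma ftc (a b : ℝ) : ∫ s in a..b, D.f s = D.F b - D.F a :=
  intervalIntegral.integral_eq_sub_of_hasDerivAt (fun x _ => D.deriv_eq x)
    ((contf D).intervalIntegrable a b)

lemma ftc_shift (δ a b : ℝ) : ∫ s in a..b, D.f (s + δ) = D.F (b + δ) - D.F (a + δ) := by
  have hd : ∀ s : ℝ, HasDerivAt (fun u => D.F (u + δ)) (D.f (s + δ)) s := by
    intro s
    have := (D.deriv_eq (s + δ)).comp s ((hasDerivAt_id s).add_const δ)
    simpa [Function.comp_def] using this
  exact intervalIntegral.integral_eq_sub_of_hasDerivAt (fun x _ => hd x)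
    (((contf D).comp (continuous_id.add continuous_const)).intervalIntegrable a b)

lemma ftc_shift' (δ a b : ℝ) : ∫ s in a..b, D.f (s - δ) = D.F (b - δ) - D.F (a - δ) := by
  have hd : ∀ s : ℝ, HasDerivAt (fun u => D.F (u - δ)) (D.f (s - δ)) s := by
    intro s
    have := (D.deriv_eq (s - δ)).comp s ((hasDerivAt_id s).sub_const δ)
    simpa [Function.comp_def] using this
  exact intervalIntegral.integral_eq_sub_of_hasDerivAt (fun x _ => hd x)
    (((contf D).comp (continuous_id.sub continuous_const)).intervalIntegrable a b)

lemma Fratio {x y : ℝ} (hxy : x ≤ y) : D.F x * D.f y ≤ D.F y * D.f x := by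
  set δ := y - x with hδdef
  have hδ : 0 ≤ δ := by simp [hδdef]; linarith
  have key : ∀ a : ℝ, a ≤ x → D.F x * D.f y ≤ D.F y * D.f x + D.F a * D.f y := by
    intro a ha
    have i1 : ∫ s in a..x, D.f s * D.f y = (D.F x - D.F a) * D.f y := by
      rw [intervalIntegral.integral_mul_const, ftc]
    have hy : x + δ = y := by simp [hδdef]
    have i2 : ∫ s in a..x, D.f (s + δ) * D.f x = (D.F y - D.F (a + δ)) * D.f x := by
      rw [intervalIntegral.integral_mul_const, ftc_shift, hy]
    have hmono : ∫ s in a..x, D.f s * D.f y ≤ ∫ s in a..x, D.f (s + δ) * D.f x := by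
      refine intervalIntegral.integral_mono_on ha ?_ ?_ ?_
      · exact (((contf D).mul continuous_const)).intervalIntegrable a x
      · exact ((((contf D).comp (continuous_id.add continuous_const)).mul
          continuous_const)).intervalIntegrable a x
      intro s hs
      have := logconc D (hs.2 : s ≤ x) hδ
      rw [hy] at this
      exact this
    rw [i1, i2] at hmono
    have hFa : 0 ≤ D.F (a + δ) := F_nonneg D _
    nlinarith [D.f_pos x, F_nonneg D a, D.f_pos y]
  have tz : Filter.Tendsto (fun a => D.F y * D.f x + D.F a * D.f y) Filter.atBot
      (nhds (D.F y * D.f x + 0 * D.f y)) :=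
    Filter.Tendsto.const_add _ (D.tendsto_bot.mul_const _)
  have hle : D.F x * D.f y ≤ D.F y * D.f x + 0 * D.f y := by
    refine ge_of_tendsto tz ?_
    filter_upwards [Filter.eventually_le_atBot x] with a ha using key a ha
  linarith

lemma Gratio {x y : ℝ} (hxy : x ≤ y) : (1 - D.F y) * D.f x ≤ (1 - D.F x) * D.f y := by
  set δ := y - x with hδdef
  have hδ : 0 ≤ δ := by simp [hδdef]; linarith
  have key : ∀ B : ℝ, y ≤ B → (D.F B - D.F y) * D.f x ≤ (1 - D.F x) * D.f y := by
    intro B hB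
    have i1 : ∫ s in y..B, D.f s * D.f x = (D.F B - D.F y) * D.f x := by
      rw [intervalIntegral.integral_mul_const, ftc]
    have hyx : y - δ = x := by simp [hδdef]
    have i2 : ∫ s in y..B, D.f (s - δ) * D.f y = (D.F (B - δ) - D.F x) * D.f y := by
      rw [intervalIntegral.integral_mul_const, ftc_shift', hyx]
    have hmono : ∫ s in y..B, D.f s * D.f x ≤ ∫ s in y..B, D.f (s - δ) * D.f y := by
      refine intervalIntegral.integral_mono_on hB ?_ ?_ ?_
      · exact (((contf D).mul continuous_const)).intervalIntegrable y B
      · exact ((((contf D).comp (continuous_id.sub continuous_const)).mul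
          continuous_const)).intervalIntegrable y B
      intro s hs
      have hxs : x ≤ s - δ := by
        have h1 := hs.1
        simp only [hδdef] at *
        linarith
      have := logconc D hxs hδ
      have e1 : s - δ + δ = s := by ring
      have e2 : x + δ = y := by simp [hδdef]
      rw [e1, e2] at this
      linarith
    rw [i1, i2] at hmono
    have h1 : D.F (B - δ) ≤ 1 := F_le_one D _
    nlinarith [D.f_pos y]
  have tz : Filter.Tendsto (fun B => (D.F B - D.F y) * D.f x) Filter.atTop
      (nhds ((1 - D.F y) * D.f x)) :=
    ((D.tendsto_top.sub tendsto_const_nhds).mul_const _)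
  refine le_of_tendsto tz ?_
  filter_upwards [Filter.eventually_ge_atTop y] with B hB using key B hB

lemma min_lemma (t a : ℝ) (ha : a = t - D.F a / D.f a) (x : ℝ) :
    (a - t) * D.F a ≤ (x - t) * D.F x := by
  have hfa := D.f_pos a
  have haF : D.F a = (t - a) * D.f a := by
    have h1 : D.F a / D.f a = t - a := by linarith
    exact (div_eq_iff hfa.ne').mp h1
  have hderiv : ∀ u : ℝ, HasDerivAt (fun x => (x - t) * D.F x)
      (D.F u + (u - t) * D.f u) u := by
    intro u
    have := ((hasDerivAt_id u).sub_const t).mul (D.deriv_eq u)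
    simpa [add_comm, Pi.mul_def] using this
  have hcont : Continuous (fun u : ℝ => D.F u + (u - t) * D.f u) :=
    (contF D).add ((continuous_id.sub continuous_const).mul (contf D))
  have hint : ∀ p q : ℝ, ∫ s in p..q, (D.F s + (s - t) * D.f s) =
      (q - t) * D.F q - (p - t) * D.F p :=
    fun p q => by
      exact intervalIntegral.integral_eq_sub_of_hasDerivAt (fun s _ => hderiv s)
        (hcont.intervalIntegrable p q)
  rcases le_total a x with h | h
  · have h8 : 0 ≤ ∫ s in a..x, (D.F s + (s - t) * D.f s) := by
      apply intervalIntegral.integral_nonneg h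
      intro u hu
      have h4 := Fratio D (hu.1 : a ≤ u)
      rw [haF] at h4
      have h5 : (t - a) * D.f u ≤ D.F u := by nlinarith [D.f_pos u]
      nlinarith [D.f_pos u, hu.1]
    have h7 := hint a x
    rw [h7] at h8
    linarith
  · have h8 : 0 ≤ ∫ s in x..a, -(D.F s + (s - t) * D.f s) := by
      apply intervalIntegral.integral_nonneg h
      intro u hu
      have h4 := Fratio D (hu.2 : u ≤ a)
      rw [haF] at h4
      have h5 : D.F u ≤ (t - a) * D.f u := by nlinarith [D.f_pos u]
      nlinarith [D.f_pos u, hu.2]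
    rw [intervalIntegral.integral_neg] at h8
    have h7 := hint x a
    rw [h7] at h8
    linarith

lemma max_lemma (t b : ℝ) (hb : b = t + (1 - D.F b) / D.f b) (y : ℝ) :
    (y - t) * (1 - D.F y) ≤ (b - t) * (1 - D.F b) := by
  have hfb := D.f_pos b
  have hbF : 1 - D.F b = (b - t) * D.f b := by
    have h1 : (1 - D.F b) / D.f b = b - t := by linarith
    exact (div_eq_iff hfb.ne').mp h1
  have hderiv : ∀ u : ℝ, HasDerivAt (fun y => (y - t) * (1 - D.F y))
      ((1 - D.F u) - (u - t) * D.f u) u := by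
    intro u
    have h := ((hasDerivAt_id u).sub_const t).mul ((hasDerivAt_const u (1:ℝ)).sub (D.deriv_eq u))
    simp only [id_eq, Pi.mul_def, Pi.sub_def] at h
    refine h.congr_deriv ?_
    ring
  have hcont : Continuous (fun u : ℝ => (1 - D.F u) - (u - t) * D.f u) :=
    ((continuous_const.sub (contF D))).sub ((continuous_id.sub continuous_const).mul (contf D))
  have hint : ∀ p q : ℝ, ∫ s in p..q, ((1 - D.F s) - (s - t) * D.f s) =
      (q - t) * (1 - D.F q) - (p - t) * (1 - D.F p) :=
    fun p q => by
      exact intervalIntegral.integral_eq_sub_of_hasDerivAt (fun s _ => hderiv s)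
        (hcont.intervalIntegrable p q)
  rcases le_total y b with h | h
  · have h8 : 0 ≤ ∫ s in y..b, ((1 - D.F s) - (s - t) * D.f s) := by
      apply intervalIntegral.integral_nonneg h
      intro u hu
      have h4 := Gratio D (hu.2 : u ≤ b)
      rw [hbF] at h4
      have h5 : (b - t) * D.f u ≤ 1 - D.F u := by nlinarith [D.f_pos u]
      nlinarith [D.f_pos u, hu.2]
    have h7 := hint y b
    rw [h7] at h8
    linarith
  · have h8 : 0 ≤ ∫ s in b..y, -((1 - D.F s) - (s - t) * D.f s) := by
      apply intervalIntegral.integral_nonneg h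
      intro u hu
      have h4 := Gratio D (hu.1 : b ≤ u)
      rw [hbF] at h4
      have h5 : 1 - D.F u ≤ (b - t) * D.f u := by nlinarith [D.f_pos u]
      nlinarith [D.f_pos u, hu.1]
    rw [intervalIntegral.integral_neg] at h8
    have h7 := hint b y
    rw [h7] at h8
    linarith

end Prop6Aux

open Prop6Aux in
/-- **Proposition 6.** The threshold `Θ(t) = k₀(t)·F(k₀(t)) + k₁(t)·(1 − F(k₁(t))) +
t·(F(k₁(t)) − F(k₀(t)))` is strictly increasing on `[0,∞)`; hence if a voter with
cost `γ` has optimal `k` equal to `k₁(t)` (i.e. `γ ≤ Θ(t)`), the same holds at any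
`t' > t`. -/
theorem prop6 (D : CostDist) (k0 k1 : ℝ → ℝ)
    (hk1 : ∀ t : ℝ, 0 ≤ t → k1 t = t + (1 - D.F (k1 t)) / D.f (k1 t))
    (hk0 : ∀ t : ℝ, 0 ≤ t → k0 t = t - D.F (k0 t) / D.f (k0 t)) :
    StrictMonoOn
      (fun t : ℝ =>
        k0 t * D.F (k0 t) + k1 t * (1 - D.F (k1 t)) + t * (D.F (k1 t) - D.F (k0 t)))
      (Set.Ici 0) ∧
    (∀ gamma t t' : ℝ, 0 ≤ t → t < t' →
      gamma ≤ k0 t * D.F (k0 t) + k1 t * (1 - D.F (k1 t)) + t * (D.F (k1 t) - D.F (k0 t)) →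
      gamma ≤ k0 t' * D.F (k0 t') + k1 t' * (1 - D.F (k1 t')) +
        t' * (D.F (k1 t') - D.F (k0 t'))) := by
  have hΘ : True := trivial
  set Θ : ℝ → ℝ := fun t =>
    k0 t * D.F (k0 t) + k1 t * (1 - D.F (k1 t)) + t * (D.F (k1 t) - D.F (k0 t)) with hΘdef
  have hk1gt : ∀ s : ℝ, 0 ≤ s → s < k1 s := by
    intro s hs
    have h := hk1 s hs
    have h1 : 0 < (1 - D.F (k1 s)) / D.f (k1 s) :=
      div_pos (by linarith [F_lt_one D (k1 s)]) (D.f_pos _)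
    linarith
  have hk0lt : ∀ s : ℝ, 0 ≤ s → k0 s < s := by
    intro s hs
    have h := hk0 s hs
    have h1 : 0 < D.F (k0 s) / D.f (k0 s) := div_pos (F_pos D _) (D.f_pos _)
    linarith
  have lip : ∀ u c : ℝ, 0 ≤ u → u ≤ c → k1 c ≤ k1 u + (c - u) := by
    intro u c hu huc
    have hc : (0:ℝ) ≤ c := le_trans hu huc
    rcases le_total (k1 c) (k1 u) with h | h
    · linarith
    · have hg := Gratio D h
      have e1 : 1 - D.F (k1 u) = (k1 u - u) * D.f (k1 u) := by
        have h1 : (1 - D.F (k1 u)) / D.f (k1 u) = k1 u - u := by linarith [hk1 u hu]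
        exact (div_eq_iff (D.f_pos _).ne').mp h1
      have e2 : 1 - D.F (k1 c) = (k1 c - c) * D.f (k1 c) := by
        have h1 : (1 - D.F (k1 c)) / D.f (k1 c) = k1 c - c := by linarith [hk1 c hc]
        exact (div_eq_iff (D.f_pos _).ne').mp h1
      rw [e1, e2] at hg
      have hP : 0 < D.f (k1 u) * D.f (k1 c) := mul_pos (D.f_pos _) (D.f_pos _)
      have h3 : (k1 c - c) * (D.f (k1 u) * D.f (k1 c)) ≤
          (k1 u - u) * (D.f (k1 u) * D.f (k1 c)) := by nlinarith [hg]
      have h4 := (mul_le_mul_iff_of_pos_right hP).mp h3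
      linarith
  have local_step : ∀ s s'' : ℝ, 0 ≤ s → s < s'' → s'' ≤ k1 s → Θ s < Θ s'' := by
    intro s s'' hs h1 h2
    have hs'' : (0:ℝ) ≤ s'' := le_trans hs h1.le
    have m1 := min_lemma D s (k0 s) (hk0 s hs) (k0 s'')
    have m2 := max_lemma D s'' (k1 s'') (hk1 s'' hs'') (k1 s)
    have e0 : k0 s'' < s'' := hk0lt s'' hs''
    have key : D.F (k0 s'') < D.F (k1 s) := smF D (lt_of_lt_of_le e0 h2)
    simp only [hΘdef]
    nlinarith [mul_pos (sub_pos.mpr h1) (sub_pos.mpr key)]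
  have main : ∀ t t' : ℝ, 0 ≤ t → t < t' → Θ t < Θ t' := by
    intro t t' ht htt'
    set T := {u : ℝ | u ∈ Set.Icc t t' ∧ (t < u → Θ t < Θ u)} with hT
    have htT : t ∈ T := ⟨⟨le_refl t, htt'.le⟩, fun h => absurd h (lt_irrefl t)⟩
    have hTne : T.Nonempty := ⟨t, htT⟩
    have hTbdd : BddAbove T := ⟨t', fun u hu => hu.1.2⟩
    set c := sSup T with hc
    have hct : t ≤ c := le_csSup hTbdd htT
    have hct' : c ≤ t' := csSup_le hTne (fun u hu => hu.1.2)
    have hc0 : (0:ℝ) ≤ c := le_trans ht hct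
    have hcmem : t < c → Θ t < Θ c := by
      intro htc
      have hε : c < k1 c := hk1gt c hc0
      obtain ⟨u, huT, hu⟩ := exists_lt_of_lt_csSup hTne (show c - (k1 c - c) < c by linarith)
      have huc : u ≤ c := le_csSup hTbdd huT
      rcases eq_or_lt_of_le huc with heq | hlt
      · rw [← heq]; exact huT.2 (heq ▸ htc)
      · have hu0 : (0:ℝ) ≤ u := le_trans ht huT.1.1
        have hck : c ≤ k1 u := by
          have := lip u c hu0 huc
          linarith
        have hstep : Θ u < Θ c := local_step u c hu0 hlt hck
        rcases eq_or_lt_of_le huT.1.1 with heq2 | htu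
        · rw [heq2]; exact hstep
        · exact lt_trans (huT.2 htu) hstep
    rcases eq_or_lt_of_le hct' with heq | hclt
    · rw [← heq]; exact hcmem (heq ▸ htt')
    · exfalso
      set w := min t' (k1 c) with hw
      have hcw : c < w := lt_min hclt (hk1gt c hc0)
      have hstep : Θ c < Θ w := local_step c w hc0 hcw (min_le_right _ _)
      have hΘtc : Θ t ≤ Θ c := by
        rcases eq_or_lt_of_le hct with heq2 | h2
        · rw [heq2]
        · exact (hcmem h2).le
      have hwT : w ∈ T := ⟨⟨le_trans hct hcw.le, min_le_left _ _⟩,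
        fun _ => lt_of_le_of_lt hΘtc hstep⟩
      have : w ≤ c := le_csSup hTbdd hwT
      linarith
  refine ⟨fun a ha b _ hab => main a b ha hab, fun gamma t t' ht h hg => ?_⟩
  exact hg.trans (main t t' ht h).le
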